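/- Let (X, Q, Φ, R) be an invariant finite L-presentation of G = F/N, where F is the free group on the finite set X, N is the normal closure in F of Q ∪ ⋃_{σ∈Φ*} σ(R), and σ(N) ⊆ N for all σ ∈ Φ. Let H be a normal subgroup of F of finite index with N ⊆ H, and let φ : F → Sym(H\F) be the permutation representation of F on the right cosets of H. For a word w = ψ₁ψ₂⋯ψ_n over Φ let ŵ ∈ End(F) denote the composite endomorphism obtained by applying ψ₁ first, then ψ₂, and so on. Suppose there is a finite set Ṽ of words over Φ which contains the empty word, is closed under deleting its first letter, is such that every word w over Φ satisfies ŵ ⤳_φ v̂ for some v ∈ Ṽ, and such that for every ψ ∈ Φ and every δ ∈ Ṽ with the word ψδ not in Ṽ one has (ψδ)̂ ⤳_φ id (the normal subgroup H/N of G is then called weakly leaf-invariant). Then H/N is invariantly finitely L-presented. -/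

import Mathlib

/-- The kernel of a finite `L`-presentation: the normal closure in the free group of
`Q ∪ ⋃_{σ ∈ Φ*} σ(R)`, where `Φ*` is the submonoid of `End(F)` generated by `Φ`. -/
def lpresKernel {X : Type} (Q R : Set (FreeGroup X))
    (Φ : Set (Monoid.End (FreeGroup X))) : Subgroup (FreeGroup X) :=
  Subgroup.normalClosure (Q ∪ ⋃ σ ∈ Submonoid.closure Φ, ⇑σ '' R)

instance lpresKernel_normal {X : Type} (Q R : Set (FreeGroup X))
    (Φ : Set (Monoid.End (FreeGroup X))) : (lpresKernel Q R Φ).Normal :=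
  Subgroup.normalClosure_normal

/-- A group is finitely `L`-presented if it is isomorphic to the group presented by a
finite `L`-presentation `(X, Q, Φ, R)`. -/
def IsFinitelyLPresented (G : Type*) [Group G] : Prop :=
  ∃ (n : ℕ) (Q R : Finset (FreeGroup (Fin n)))
    (Φ : Finset (Monoid.End (FreeGroup (Fin n)))),
    Nonempty (G ≃* FreeGroup (Fin n) ⧸ lpresKernel (Q : Set _) (R : Set _) (Φ : Set _))

/-- A group is invariantly finitely `L`-presented if it admits a finite `L`-presentation
`(X, Q, Φ, R)` such that each `σ ∈ Φ` leaves the kernel `N` invariant. -/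
def IsInvariantlyFinitelyLPresented (G : Type*) [Group G] : Prop :=
  ∃ (n : ℕ) (Q R : Finset (FreeGroup (Fin n)))
    (Φ : Finset (Monoid.End (FreeGroup (Fin n)))),
    (∀ σ ∈ Φ, ∀ g ∈ lpresKernel (Q : Set _) (R : Set _) (Φ : Set _),
        σ g ∈ lpresKernel (Q : Set _) (R : Set _) (Φ : Set _)) ∧
    Nonempty (G ≃* FreeGroup (Fin n) ⧸ lpresKernel (Q : Set _) (R : Set _) (Φ : Set _))

/-- The permutation representation of a group `F` on the right cosets `H\F` of a
subgroup `H`, induced by right multiplication.  (With Mathlib's convention that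
permutations compose right-to-left, the element `g` acts on a right coset `Hx`
as `Hx ↦ Hxg⁻¹`, which makes `g ↦ (Hx ↦ Hxg)` into a monoid homomorphism when
read in the usual left-to-right convention for permutation actions.) -/
def rightCosetRep {F : Type*} [Group F] (H : Subgroup F) :
    F →* Equiv.Perm (Quotient (QuotientGroup.rightRel H)) where
  toFun g :=
    { toFun := Quotient.map' (· * g⁻¹) fun a b hab => by
        rw [QuotientGroup.rightRel_apply] at hab ⊢
        simpa [mul_assoc] using hab
      invFun := Quotient.map' (· * g) fun a b hab => by
        rw [QuotientGroup.rightRel_apply] at hab ⊢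
        simpa [mul_assoc] using hab
      left_inv := fun q => Quotient.inductionOn' q fun a => by
        simp [Quotient.map'_mk'', mul_assoc]
      right_inv := fun q => Quotient.inductionOn' q fun a => by
        simp [Quotient.map'_mk'', mul_assoc] }
  map_one' := by
    ext q
    exact Quotient.inductionOn' q fun a => by simp [Quotient.map'_mk'']
  map_mul' x y := by
    ext q
    exact Quotient.inductionOn' q fun a => by simp [Quotient.map'_mk'', mul_assoc]

/-- For a word `w = [ψ₁, ψ₂, …, ψₙ]` over the endomorphisms of `F`, the composite
endomorphism obtained by applying `ψ₁` first, then `ψ₂`, and so on. -/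
def wordHat {F : Type*} [Group F] (w : List (Monoid.End F)) : Monoid.End F :=
  w.reverse.prod

/-- `σ ⤳_φ δ`: there is a group homomorphism `π` from the image of `φ ∘ δ` to the
codomain of `φ` such that `φ ∘ σ = π ∘ (φ ∘ δ)`. -/
def leadsTo {F S : Type*} [Group F] [Group S] (φ : F →* S)
    (σ δ : Monoid.End F) : Prop :=
  ∃ π : (φ.comp (δ : F →* F)).range →* S,
    ∀ g : F, φ (σ g) = π ⟨φ (δ g), ⟨g, rfl⟩⟩

/-! ### Auxiliary material for the proof of Theorem 7.4 -/

section WordHatAux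
variable {F : Type*} [Group F]

@[simp] lemma wordHat_nil : wordHat ([] : List (Monoid.End F)) = 1 := rfl

lemma wordHat_cons (ψ : Monoid.End F) (w : List (Monoid.End F)) :
    wordHat (ψ :: w) = wordHat w * ψ := by
  simp [wordHat]

lemma wordHat_append (u v : List (Monoid.End F)) :
    wordHat (u ++ v) = wordHat v * wordHat u := by
  simp [wordHat]

lemma end_mul_apply (a b : Monoid.End F) (g : F) : (a * b) g = a (b g) := rfl

lemma wordHat_mem_closure {Φ : Set (Monoid.End F)} {w : List (Monoid.End F)}
    (h : ∀ ψ ∈ w, ψ ∈ Φ) : wordHat w ∈ Submonoid.closure Φ :=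
  Submonoid.list_prod_mem _ fun x hx => Submonoid.subset_closure (h x (List.mem_reverse.mp hx))

lemma exists_word_of_mem_closure {Φ : Set (Monoid.End F)} {σ : Monoid.End F}
    (h : σ ∈ Submonoid.closure Φ) :
    ∃ w : List (Monoid.End F), (∀ ψ ∈ w, ψ ∈ Φ) ∧ wordHat w = σ := by
  induction h using Submonoid.closure_induction with
  | mem x hx => exact ⟨[x], by simpa using hx, by simp [wordHat]⟩
  | one => exact ⟨[], by simp, rfl⟩
  | mul x y hx hy ihx ihy =>
      obtain ⟨w1, h1, e1⟩ := ihx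
      obtain ⟨w2, h2, e2⟩ := ihy
      refine ⟨w2 ++ w1, ?_, by rw [wordHat_append, e1, e2]⟩
      intro ψ hψ
      rcases List.mem_append.mp hψ with h' | h'
      · exact h2 ψ h'
      · exact h1 ψ h'

lemma wordHat_maps {P : Subgroup F} {w : List (Monoid.End F)}
    (h : ∀ ψ ∈ w, ∀ g ∈ P, ψ g ∈ P) : ∀ g ∈ P, wordHat w g ∈ P := by
  induction w with
  | nil => intro g hg; exact hg
  | cons a w ih =>
      intro g hg
      rw [wordHat_cons, end_mul_apply]
      exact ih (fun ψ hψ => h ψ (List.mem_cons_of_mem _ hψ)) _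
        (h a List.mem_cons_self g hg)

end WordHatAux

section RightCosetAux
variable {F : Type*} [Group F]

lemma rightCosetRep_apply (H : Subgroup F) (g a : F) :
    rightCosetRep H g (Quotient.mk'' a) = Quotient.mk'' (a * g⁻¹) := rfl

lemma mem_of_rightCosetRep_eq_one (H : Subgroup F) {g : F}
    (h : rightCosetRep H g = 1) : g ∈ H := by
  have h1 : rightCosetRep H g (Quotient.mk'' 1) = Quotient.mk'' 1 := by rw [h]; rfl
  rw [rightCosetRep_apply] at h1
  have := Quotient.exact' h1
  rw [QuotientGroup.rightRel_apply] at this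
  simpa using this

lemma rightCosetRep_eq_one_of_mem (H : Subgroup F) [hH : H.Normal] {g : F}
    (h : g ∈ H) : rightCosetRep H g = 1 := by
  ext q
  refine Quotient.inductionOn' q fun a => ?_
  rw [Equiv.Perm.coe_one, id_eq, rightCosetRep_apply]
  refine Quotient.sound' ?_
  rw [QuotientGroup.rightRel_apply]
  simpa [mul_assoc] using hH.conj_mem _ h a

lemma leadsTo_one_mem {σ : Monoid.End F} {H : Subgroup F} [H.Normal]
    (h : leadsTo (rightCosetRep H) σ 1) {g : F} (hg : g ∈ H) : σ g ∈ H := by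
  obtain ⟨π, hπ⟩ := h
  apply mem_of_rightCosetRep_eq_one H
  rw [hπ g]
  have e1 : (⟨rightCosetRep H ((1 : Monoid.End F) g), ⟨g, rfl⟩⟩ :
      ((rightCosetRep H).comp ((1 : Monoid.End F) : F →* F)).range) = 1 :=
    Subtype.ext (rightCosetRep_eq_one_of_mem H hg)
  rw [e1, map_one]

end RightCosetAux

section DecompAux

lemma exists_leaf_decomp {M : Type*} (V : Finset (List M)) (hVnil : ([] : List M) ∈ V) :
    ∀ w : List M, w ∈ V ∨ ∃ u ψ δ, δ ∈ V ∧ ψ :: δ ∉ V ∧ w = u ++ ψ :: δ := by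
  intro w
  induction w with
  | nil => exact Or.inl hVnil
  | cons a w ih =>
      by_cases h : a :: w ∈ V
      · exact Or.inl h
      · rcases ih with hw | ⟨u, ψ, δ, h1, h2, h3⟩
        · exact Or.inr ⟨[], a, w, hw, h, rfl⟩
        · exact Or.inr ⟨a :: u, ψ, δ, h1, h2, by rw [h3]; rfl⟩

lemma finite_of_fg_freeGroup {X : Type*} (h : Group.FG (FreeGroup X)) : Finite X := by
  classical
  obtain ⟨T, hT⟩ := Group.fg_def.mp h
  let A : Set X := ⋃ s ∈ T, {x | x ∈ (FreeGroup.toWord s).map Prod.fst}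
  have hA : A.Finite := Set.Finite.biUnion T.finite_toSet fun s _ => List.finite_toSet _
  have hXA : (Set.univ : Set X) ⊆ A := by
    intro x _
    by_contra hx
    set π : FreeGroup X →* Multiplicative ℤ :=
      FreeGroup.lift (fun y => if y = x then Multiplicative.ofAdd 1 else 1) with hπ
    have hT1 : ∀ s ∈ T, π s = 1 := by
      intro s hs
      have hx' : ∀ p ∈ (FreeGroup.toWord s), (p : X × Bool).1 ≠ x := by
        intro p hp hpx
        exact hx (Set.mem_biUnion hs (by simpa [hpx] using List.mem_map_of_mem (f := Prod.fst) hp))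
      conv_lhs => rw [← FreeGroup.mk_toWord (x := s)]
      rw [hπ, FreeGroup.lift_mk]
      apply List.prod_eq_one
      intro a ha
      obtain ⟨p, hp, rfl⟩ := List.mem_map.mp ha
      have := hx' p hp
      cases p.2 <;> simp [this]
    have hker : (⊤ : Subgroup (FreeGroup X)) ≤ π.ker := by
      rw [← hT]
      apply (Subgroup.closure_le _).mpr
      intro s hs
      exact hT1 s hs
    have : π (FreeGroup.of x) = 1 := hker (Subgroup.mem_top _)
    rw [hπ] at this
    simp [FreeGroup.lift_apply_of] at this
  exact Set.finite_univ_iff.mp (hA.subset hXA)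

end DecompAux

section Constr

variable {F : Type*} [Group F]

/-- Conjugation endomorphism `g ↦ a⁻¹ g a`. -/
def conjEnd (a : F) : Monoid.End F where
  toFun g := a⁻¹ * g * a
  map_one' := by simp
  map_mul' g h := by group

lemma conjEnd_apply (a g : F) : conjEnd a g = a⁻¹ * g * a := rfl

lemma conjEnd_mul (a b : F) : conjEnd (a * b) = conjEnd b * conjEnd a :=
  DFunLike.ext _ _ fun g => by
    show (a*b)⁻¹ * g * (a*b) = b⁻¹ * (a⁻¹ * g * a) * b
    group

def BSet (Q R : Finset F) (V : Finset (List (Monoid.End F))) : Set F :=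
  ↑Q ∪ ⋃ v ∈ V, ⇑(wordHat v) '' ↑R

lemma BSet_finite (Q R : Finset F) (V : Finset (List (Monoid.End F))) :
    (BSet Q R V).Finite :=
  Q.finite_toSet.union <| Set.Finite.biUnion V.finite_toSet fun _ _ =>
    R.finite_toSet.image _

def LeafSet (Φ : Finset (Monoid.End F)) (V : Finset (List (Monoid.End F))) :
    Set (Monoid.End F) :=
  {e | ∃ ψ ∈ Φ, ∃ δ ∈ V, ψ :: δ ∉ V ∧ e = wordHat (ψ :: δ)}

def ESet (Φ : Finset (Monoid.End F)) (V : Finset (List (Monoid.End F)))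
    (H : Subgroup F) : Set (Monoid.End F) :=
  LeafSet Φ V ∪
    Set.range (fun x : Quotient (QuotientGroup.rightRel H) => conjEnd (Quotient.out x))

lemma ESet_finite (Φ : Finset (Monoid.End F)) (V : Finset (List (Monoid.End F)))
    (H : Subgroup F) [Finite (Quotient (QuotientGroup.rightRel H))] :
    (ESet Φ V H).Finite := by
  refine Set.Finite.union ?_ (Set.finite_range _)
  refine Set.Finite.subset ((Φ.finite_toSet.prod V.finite_toSet).image
    fun pr => wordHat (pr.1 :: pr.2)) ?_
  rintro e ⟨ψ, hψ, δ, hδ, -, rfl⟩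
  exact ⟨(ψ, δ), ⟨hψ, hδ⟩, rfl⟩

def OrbSet (Q R : Finset F) (Φ : Finset (Monoid.End F))
    (V : Finset (List (Monoid.End F))) (H : Subgroup F) : Set F :=
  ⋃ μ ∈ Submonoid.closure (ESet Φ V H), ⇑μ '' BSet Q R V

lemma closure_maps {E : Set (Monoid.End F)} {p : F → Prop}
    (hE : ∀ e ∈ E, ∀ g, p g → p (e g)) :
    ∀ μ ∈ Submonoid.closure E, ∀ g, p g → p (μ g) := by
  intro μ hμ
  induction hμ using Submonoid.closure_induction with
  | mem e he => exact hE e he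
  | one => exact fun g hg => hg
  | mul x y hx hy ihx ihy => exact fun g hg => ihx _ (ihy g hg)

lemma exists_factor (Φ : Finset (Monoid.End F)) (V : Finset (List (Monoid.End F)))
    (hVnil : ([] : List (Monoid.End F)) ∈ V) :
    ∀ w : List (Monoid.End F), (∀ ψ ∈ w, ψ ∈ Φ) →
      ∃ μ ∈ Submonoid.closure (LeafSet Φ V),
        ∃ v ∈ V, (∀ ψ ∈ v, ψ ∈ Φ) ∧ wordHat w = μ * wordHat v := by
  have key : ∀ k : ℕ, ∀ w : List (Monoid.End F), w.length ≤ k → (∀ ψ ∈ w, ψ ∈ Φ) →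
      ∃ μ ∈ Submonoid.closure (LeafSet Φ V),
        ∃ v ∈ V, (∀ ψ ∈ v, ψ ∈ Φ) ∧ wordHat w = μ * wordHat v := by
    intro k
    induction k with
    | zero =>
        intro w hw _
        have : w = [] := List.length_eq_zero_iff.mp (Nat.le_zero.mp hw)
        subst this
        exact ⟨1, one_mem _, [], hVnil, by simp, (one_mul _).symm⟩
    | succ k ih =>
        intro w hw hwΦ
        rcases exists_leaf_decomp V hVnil w with hwV | ⟨u, ψ, δ, hδ, hψδ, rfl⟩
        · exact ⟨1, one_mem _, w, hwV, hwΦ, (one_mul _).symm⟩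
        · have hu : u.length ≤ k := by
            have := hw
            simp only [List.length_append, List.length_cons] at this
            omega
          obtain ⟨μ, hμ, v, hv, hvΦ, he⟩ := ih u hu (fun x hx => hwΦ x (by simp [hx]))
          refine ⟨wordHat (ψ :: δ) * μ, mul_mem (Submonoid.subset_closure
            ⟨ψ, hwΦ ψ (by simp), δ, hδ, hψδ, rfl⟩) hμ, v, hv, hvΦ, ?_⟩
          rw [wordHat_append, he, mul_assoc]
  exact fun w => key w.length w le_rfl

end Constr

section Transport

variable {F K : Type*} [Group F] [Group K] (H : Subgroup F) (θ : K ≃* ↥H)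

open scoped Classical in
noncomputable def endoTransport (e : Monoid.End F) : Monoid.End K :=
  if h : ∀ x ∈ H, e x ∈ H then
    (θ.symm.toMonoidHom.comp
      ((e.comp H.subtype).codRestrict H (fun x => h x x.2))).comp θ.toMonoidHom
  else 1

open scoped Classical in
noncomputable def pullbk (b : F) : K :=
  if h : b ∈ H then θ.symm ⟨b, h⟩ else 1

def pMap : K →* F := H.subtype.comp θ.toMonoidHom

lemma pMap_apply (k : K) : pMap H θ k = ↑(θ k) := rfl

lemma pMap_mem (k : K) : pMap H θ k ∈ H := (θ k).2

lemma pMap_injective : Function.Injective (pMap H θ) :=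
  Subtype.coe_injective.comp θ.injective

lemma pMap_endoTransport {e : Monoid.End F} (h : ∀ x ∈ H, e x ∈ H) (k : K) :
    pMap H θ (endoTransport H θ e k) = e (pMap H θ k) := by
  classical
  rw [show endoTransport H θ e = _ from dif_pos h]
  show (H.subtype) (θ (θ.symm (((e.comp H.subtype).codRestrict H _) (θ k)))) = _
  rw [MulEquiv.apply_symm_apply]
  rfl

lemma pMap_pullbk {b : F} (hb : b ∈ H) : pMap H θ (pullbk H θ b) = b := by
  rw [pullbk, dif_pos hb]
  show (H.subtype) (θ (θ.symm ⟨b, hb⟩)) = b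
  rw [MulEquiv.apply_symm_apply]
  rfl

lemma transport_closure_forward {E : Set (Monoid.End F)}
    (hE : ∀ e ∈ E, ∀ x ∈ H, e x ∈ H) :
    ∀ σ ∈ Submonoid.closure (endoTransport H θ '' E),
      ∃ μ ∈ Submonoid.closure E, ∀ k, pMap H θ (σ k) = μ (pMap H θ k) := by
  intro σ hσ
  induction hσ using Submonoid.closure_induction with
  | mem s hs =>
      obtain ⟨e, he, rfl⟩ := hs
      exact ⟨e, Submonoid.subset_closure he, fun k => pMap_endoTransport H θ (hE e he) k⟩
  | one => exact ⟨1, one_mem _, fun k => rfl⟩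
  | mul x y hx hy ihx ihy =>
      obtain ⟨μ, hμ, hμk⟩ := ihx
      obtain ⟨ν, hν, hνk⟩ := ihy
      exact ⟨μ * ν, mul_mem hμ hν, fun k => by
        have h1 : (x * y) k = x (y k) := rfl
        rw [h1, hμk, hνk]; rfl⟩

lemma transport_closure_backward {E : Set (Monoid.End F)}
    (hE : ∀ e ∈ E, ∀ x ∈ H, e x ∈ H) :
    ∀ μ ∈ Submonoid.closure E,
      ∃ σ ∈ Submonoid.closure (endoTransport H θ '' E),
        ∀ k, pMap H θ (σ k) = μ (pMap H θ k) := by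
  intro μ hμ
  induction hμ using Submonoid.closure_induction with
  | mem e he =>
      exact ⟨endoTransport H θ e, Submonoid.subset_closure ⟨e, he, rfl⟩,
        fun k => pMap_endoTransport H θ (hE e he) k⟩
  | one => exact ⟨1, one_mem _, fun k => rfl⟩
  | mul x y hx hy ihx ihy =>
      obtain ⟨σ, hσ, hσk⟩ := ihx
      obtain ⟨τ, hτ, hτk⟩ := ihy
      exact ⟨σ * τ, mul_mem hσ hτ, fun k => by
        have h1 : (σ * τ) k = σ (τ k) := rfl
        rw [h1, hσk, hτk]; rfl⟩

end Transport

/-- Theorem 7.4: a weakly leaf-invariant normal subgroup of finite index in an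
invariantly finitely `L`-presented group is invariantly finitely `L`-presented.
Here `G = F/N` is presented by the invariant finite `L`-presentation `(X, Q, Φ, R)`,
`H ⊴ F` is normal of finite index with `N ⊆ H`, `φ` is the permutation representation
of `F` on the right cosets of `H`, words over `Φ` are lists (with `ŵ` applying the
first letter first), and `H/N` is weakly leaf-invariant with respect to the finite
set of words `Ṽ` (here `V`) containing the empty word and closed under deleting the
first letter. -/
theorem weaklyLeafInvariant_normal_subgroup_isInvariantlyFinitelyLPresented
    (n : ℕ) (Q R : Finset (FreeGroup (Fin n)))
    (Φ : Finset (Monoid.End (FreeGroup (Fin n))))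
    (N : Subgroup (FreeGroup (Fin n))) (hNn : N.Normal)
    (hN : N = lpresKernel (Q : Set _) (R : Set _) (Φ : Set _))
    (hinv : ∀ σ ∈ Φ, ∀ g ∈ N, σ g ∈ N)
    (H : Subgroup (FreeGroup (Fin n))) (hHn : H.Normal) (hHfi : H.FiniteIndex)
    (hNH : N ≤ H)
    (φ : FreeGroup (Fin n) →* Equiv.Perm (Quotient (QuotientGroup.rightRel H)))
    (hφ : φ = rightCosetRep H)
    (V : Finset (List (Monoid.End (FreeGroup (Fin n)))))
    (hVword : ∀ w ∈ V, ∀ ψ ∈ w, ψ ∈ Φ)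
    (hVnil : ([] : List (Monoid.End (FreeGroup (Fin n)))) ∈ V)
    (hVtail : ∀ (ψ : Monoid.End (FreeGroup (Fin n)))
      (δ : List (Monoid.End (FreeGroup (Fin n)))), ψ :: δ ∈ V → δ ∈ V)
    (hVcover : ∀ w : List (Monoid.End (FreeGroup (Fin n))), (∀ ψ ∈ w, ψ ∈ Φ) →
      ∃ v ∈ V, leadsTo φ (wordHat w) (wordHat v))
    (hleaf : ∀ ψ ∈ Φ, ∀ δ ∈ V, ψ :: δ ∉ V →
      leadsTo φ (wordHat (ψ :: δ)) (1 : Monoid.End (FreeGroup (Fin n)))) :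
    IsInvariantlyFinitelyLPresented (H.map (QuotientGroup.mk' N)) := by
  classical
  subst hφ
  haveI : Finite (Quotient (QuotientGroup.rightRel H)) :=
    Finite.of_equiv _ (QuotientGroup.quotientRightRelEquivQuotientLeftRel H).symm
  -- `H` is a finitely generated free group
  haveI : Group.FG (FreeGroup (Fin n)) := by
    refine Group.fg_def.mpr ⟨(Set.finite_range (FreeGroup.of (α := Fin n))).toFinset, ?_⟩
    rw [Set.Finite.coe_toFinset]
    exact FreeGroup.closure_range_of _
  haveI : Group.FG ↥H := inferInstance
  haveI : IsFreeGroup ↥H := inferInstance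
  have hfg2 : Group.FG (FreeGroup (IsFreeGroup.Generators ↥H)) :=
    Group.fg_of_surjective (f := (IsFreeGroup.toFreeGroup ↥H).toMonoidHom)
      (IsFreeGroup.toFreeGroup ↥H).surjective
  haveI : Finite (IsFreeGroup.Generators ↥H) := finite_of_fg_freeGroup hfg2
  haveI := Fintype.ofFinite (IsFreeGroup.Generators ↥H)
  set m := Fintype.card (IsFreeGroup.Generators ↥H) with hm
  set θ : FreeGroup (Fin m) ≃* ↥H :=
    (FreeGroup.freeGroupCongr (Fintype.equivFin (IsFreeGroup.Generators ↥H))).symm.trans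
      (IsFreeGroup.toFreeGroup ↥H).symm with hθ
  -- basic mapping facts
  have hLeafH : ∀ e ∈ LeafSet Φ V, ∀ g ∈ H, e g ∈ H := by
    rintro e ⟨ψ, hψ, δ, hδ, hno, rfl⟩ g hg
    exact leadsTo_one_mem (hleaf ψ hψ δ hδ hno) hg
  have hEH : ∀ e ∈ ESet Φ V H, ∀ g ∈ H, e g ∈ H := by
    rintro e (he | ⟨x, rfl⟩) g hg
    · exact hLeafH e he g hg
    · simpa [conjEnd_apply, mul_assoc] using hHn.conj_mem g hg (Quotient.out x)⁻¹
  have hwordN : ∀ w : List (Monoid.End (FreeGroup (Fin n))), (∀ ψ ∈ w, ψ ∈ Φ) →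
      ∀ g ∈ N, wordHat w g ∈ N := fun w hw =>
    wordHat_maps (fun ψ hψ => hinv ψ (hw ψ hψ))
  have hEN : ∀ e ∈ ESet Φ V H, ∀ g ∈ N, e g ∈ N := by
    rintro e (⟨ψ, hψ, δ, hδ, hno, rfl⟩ | ⟨x, rfl⟩) g hg
    · refine hwordN (ψ :: δ) ?_ g hg
      intro a ha
      rcases List.mem_cons.mp ha with rfl | h'
      · exact hψ
      · exact hVword δ hδ a h'
    · simpa [conjEnd_apply, mul_assoc] using hNn.conj_mem g hg (Quotient.out x)⁻¹
  have hBN : ∀ b ∈ BSet Q R V, b ∈ N := by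
    rintro b (hb | hb)
    · rw [hN]; exact Subgroup.subset_normalClosure (Or.inl hb)
    · simp only [Set.mem_iUnion] at hb
      obtain ⟨v, hv, r, hr, rfl⟩ := hb
      rw [hN]
      refine Subgroup.subset_normalClosure (Or.inr ?_)
      simp only [Set.mem_iUnion]
      exact ⟨wordHat v, wordHat_mem_closure (fun ψ hψ => hVword v hv ψ hψ), r, hr, rfl⟩
  have hBH : ∀ b ∈ BSet Q R V, b ∈ H := fun b hb => hNH (hBN b hb)
  have hOrbN : ∀ y ∈ OrbSet Q R Φ V H, y ∈ N := by
    intro y hy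
    simp only [OrbSet, Set.mem_iUnion] at hy
    obtain ⟨μ, hμ, b, hb, rfl⟩ := hy
    exact closure_maps (p := (· ∈ N)) hEN μ hμ b (hBN b hb)
  have hOrbH : ∀ y ∈ OrbSet Q R Φ V H, y ∈ H := fun y hy => hNH (hOrbN y hy)
  -- Step A : N is the normal closure of the orbit set
  have hStepA : N = Subgroup.normalClosure (OrbSet Q R Φ V H) := by
    apply le_antisymm
    · rw [hN, lpresKernel]
      refine Subgroup.normalClosure_le_normal ?_
      rintro x (hx | hx)
      · refine Subgroup.subset_normalClosure ?_
        simp only [OrbSet, Set.mem_iUnion]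
        exact ⟨1, one_mem _, x, Or.inl hx, rfl⟩
      · simp only [Set.mem_iUnion] at hx
        obtain ⟨σ, hσ, r, hr, rfl⟩ := hx
        obtain ⟨w, hwΦ, rfl⟩ := exists_word_of_mem_closure hσ
        obtain ⟨μ, hμ, v, hv, hvΦ, he⟩ := exists_factor Φ V hVnil w hwΦ
        refine Subgroup.subset_normalClosure ?_
        have h2 : wordHat w r = μ (wordHat v r) := by rw [he]; rfl
        rw [h2]
        simp only [OrbSet, Set.mem_iUnion]
        refine ⟨μ, Submonoid.closure_mono Set.subset_union_left hμ,
          wordHat v r, Or.inr ?_, rfl⟩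
        simp only [Set.mem_iUnion]
        exact ⟨v, hv, r, hr, rfl⟩
    · exact Subgroup.normalClosure_le_normal (fun y hy => hOrbN y hy)
  -- the normal closure of the orbit set inside H
  set CH : Subgroup ↥H :=
    Subgroup.normalClosure {x : ↥H | (x : FreeGroup (Fin n)) ∈ OrbSet Q R Φ V H} with hCH
  have hEOrb : ∀ e ∈ ESet Φ V H, ∀ y ∈ OrbSet Q R Φ V H, e y ∈ OrbSet Q R Φ V H := by
    intro e he y hy
    simp only [OrbSet, Set.mem_iUnion] at hy ⊢
    obtain ⟨μ, hμ, b, hb, rfl⟩ := hy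
    exact ⟨e * μ, mul_mem (Submonoid.subset_closure he) hμ, b, hb, rfl⟩
  have hEC : ∀ e ∈ ESet Φ V H, ∀ x ∈ CH.map H.subtype, e x ∈ CH.map H.subtype := by
    intro e he
    have heH := hEH e he
    set eH : ↥H →* ↥H := (e.comp H.subtype).codRestrict H (fun x => heH x x.2) with heHdef
    have hle : CH ≤ CH.comap eH := by
      refine Subgroup.normalClosure_le_normal ?_
      intro x hx
      refine Subgroup.mem_comap.mpr (Subgroup.subset_normalClosure ?_)
      exact hEOrb e he _ hx
    intro x hx
    obtain ⟨y, hy, rfl⟩ := hx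
    exact ⟨eH y, Subgroup.mem_comap.mp (hle hy), rfl⟩
  have hCnormal : (CH.map H.subtype).Normal := by
    constructor
    intro x hx g
    have hx' : ∀ h ∈ H, h⁻¹ * x * h ∈ CH.map H.subtype := by
      intro h hh
      obtain ⟨y, hy, rfl⟩ := hx
      refine ⟨(⟨h, hh⟩ : ↥H)⁻¹ * y * ⟨h, hh⟩, ?_, rfl⟩
      simpa using Subgroup.normalClosure_normal.conj_mem y hy (⟨h, hh⟩ : ↥H)⁻¹
    set t := Quotient.out (Quotient.mk'' g⁻¹ : Quotient (QuotientGroup.rightRel H)) with ht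
    have hrel : g⁻¹ * t⁻¹ ∈ H := by
      have h1 : (Quotient.mk'' t : Quotient (QuotientGroup.rightRel H)) = Quotient.mk'' g⁻¹ :=
        Quotient.out_eq' _
      have h2 := Quotient.exact' h1
      rwa [QuotientGroup.rightRel_apply] at h2
    have hgx : g * x * g⁻¹ = conjEnd t (conjEnd (g⁻¹ * t⁻¹) x) := by
      rw [← end_mul_apply, ← conjEnd_mul]
      have : g⁻¹ * t⁻¹ * t = g⁻¹ := by group
      rw [this, conjEnd_apply]
      group
    rw [hgx]
    exact hEC (conjEnd t) (Or.inr ⟨Quotient.mk'' g⁻¹, rfl⟩) _ (hx' _ hrel)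
  have hC1 : CH.map H.subtype ≤ Subgroup.normalClosure (OrbSet Q R Φ V H) := by
    have hle : CH ≤ (Subgroup.normalClosure (OrbSet Q R Φ V H)).comap H.subtype :=
      Subgroup.normalClosure_le_normal
        (fun x hx => Subgroup.mem_comap.mpr (Subgroup.subset_normalClosure hx))
    exact le_trans (Subgroup.map_mono hle) (Subgroup.map_comap_le _ _)
  have hC2 : Subgroup.normalClosure (OrbSet Q R Φ V H) ≤ CH.map H.subtype := by
    haveI := hCnormal
    refine Subgroup.normalClosure_le_normal ?_
    intro y hy
    exact ⟨⟨y, hOrbH y hy⟩, Subgroup.subset_normalClosure hy, rfl⟩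
  have hNCH : N = CH.map H.subtype := hStepA.trans (le_antisymm hC2 hC1)
  -- the data of the new L-presentation
  have hBfin := BSet_finite Q R V
  have hEfin := ESet_finite Φ V H
  set Φ' : Finset (Monoid.End (FreeGroup (Fin m))) :=
    hEfin.toFinset.image (endoTransport H θ) with hΦ'
  set R' : Finset (FreeGroup (Fin m)) := hBfin.toFinset.image (pullbk H θ) with hR'
  have hΦ'coe : (Φ' : Set (Monoid.End (FreeGroup (Fin m))))
      = endoTransport H θ '' ESet Φ V H := by
    rw [hΦ', Finset.coe_image, Set.Finite.coe_toFinset]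
  have hkdef : lpresKernel (↑(∅ : Finset (FreeGroup (Fin m)))) ↑R' ↑Φ'
      = Subgroup.normalClosure
          (⋃ σ ∈ Submonoid.closure (Φ' : Set (Monoid.End (FreeGroup (Fin m)))),
            ⇑σ '' (R' : Set (FreeGroup (Fin m)))) := by
    rw [lpresKernel, Finset.coe_empty, Set.empty_union]
  -- the kernel of the new presentation
  have hker : lpresKernel (↑(∅ : Finset (FreeGroup (Fin m)))) ↑R' ↑Φ'
      = N.comap (pMap H θ) := by
    rw [hkdef]
    apply le_antisymm
    · refine Subgroup.normalClosure_le_normal ?_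
      intro x hx
      simp only [Set.mem_iUnion] at hx
      obtain ⟨σ, hσ, r, hr, rfl⟩ := hx
      rw [hΦ'coe] at hσ
      obtain ⟨μ, hμ, hcomm⟩ := transport_closure_forward H θ hEH σ hσ
      refine Subgroup.mem_comap.mpr ?_
      rw [hcomm]
      rw [hR'] at hr
      simp only [Finset.coe_image, Set.mem_image, Set.Finite.mem_toFinset] at hr
      obtain ⟨b, hb, rfl⟩ := (by
        obtain ⟨b, hb1, hb2⟩ := hr
        exact ⟨b, hBfin.mem_toFinset.mp (by simpa using hb1), hb2⟩ :
          ∃ b ∈ BSet Q R V, pullbk H θ b = r)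
      rw [pMap_pullbk H θ (hBH b hb)]
      refine hOrbN _ ?_
      simp only [OrbSet, Set.mem_iUnion]
      exact ⟨μ, hμ, b, hb, rfl⟩
    · intro x hx
      rw [Subgroup.mem_comap] at hx
      have hθx : θ x ∈ CH := by
        have hmem : pMap H θ x ∈ CH.map H.subtype := hNCH ▸ hx
        obtain ⟨y, hy, hxy⟩ := hmem
        have hyx : y = θ x := Subtype.coe_injective hxy
        rwa [hyx] at hy
      set S0 : Set (FreeGroup (Fin m)) :=
        ⋃ σ ∈ Submonoid.closure (Φ' : Set (Monoid.End (FreeGroup (Fin m)))),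
          ⇑σ '' (R' : Set (FreeGroup (Fin m))) with hS0
      have hmapnc : Subgroup.map θ.toMonoidHom (Subgroup.normalClosure S0)
          = Subgroup.normalClosure (θ.toMonoidHom '' S0) :=
        Subgroup.map_normalClosure _ _ θ.surjective
      have hsub : CH ≤ Subgroup.normalClosure (θ.toMonoidHom '' S0) := by
        refine Subgroup.normalClosure_le_normal ?_
        intro x' hx'
        simp only [OrbSet, Set.mem_iUnion, Set.mem_setOf_eq] at hx'
        obtain ⟨μ, hμ, b, hb, hbx⟩ := hx'
        obtain ⟨σ, hσ, hcomm⟩ := transport_closure_backward H θ hEH μ hμ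
        refine Subgroup.subset_normalClosure ?_
        refine ⟨σ (pullbk H θ b), ?_, ?_⟩
        · simp only [hS0, Set.mem_iUnion]
          refine ⟨σ, hΦ'coe ▸ hσ, pullbk H θ b, ?_, rfl⟩
          rw [hR']
          exact Finset.mem_coe.mpr
            (Finset.mem_image.mpr ⟨b, hBfin.mem_toFinset.mpr hb, rfl⟩)
        · apply Subtype.coe_injective
          show ((θ (σ (pullbk H θ b))) : FreeGroup (Fin n)) = _
          rw [← pMap_apply, hcomm, pMap_pullbk H θ (hBH b hb), hbx]
      obtain ⟨z, hz, hzx⟩ := hmapnc ▸ (hsub hθx)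
      have : z = x := θ.injective hzx
      rwa [this] at hz
  refine ⟨m, ∅, R', Φ', ?_, ?_⟩
  · -- invariance
    intro σ' hσ' g hg
    rw [hker, Subgroup.mem_comap] at hg ⊢
    obtain ⟨e, he, rfl⟩ := Finset.mem_image.mp hσ'
    have he' : e ∈ ESet Φ V H := hEfin.mem_toFinset.mp he
    rw [pMap_endoTransport H θ (hEH e he')]
    exact hEN e he' _ hg
  · -- the isomorphism
    set ψq : FreeGroup (Fin m) →* (FreeGroup (Fin n) ⧸ N) :=
      (QuotientGroup.mk' N).comp (pMap H θ) with hψq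
    have hkerψ : ψq.ker = lpresKernel (↑(∅ : Finset (FreeGroup (Fin m)))) ↑R' ↑Φ' := by
      rw [hker, hψq, ← MonoidHom.comap_ker, QuotientGroup.ker_mk']
    have hrangep : (pMap H θ).range = H := by
      ext x
      constructor
      · rintro ⟨k, rfl⟩; exact pMap_mem H θ k
      · intro hx; exact ⟨θ.symm ⟨x, hx⟩, by rw [pMap_apply, MulEquiv.apply_symm_apply]⟩
    have hrange : ψq.range = H.map (QuotientGroup.mk' N) := by
      rw [hψq, ← MonoidHom.map_range, hrangep]
    exact ⟨(MulEquiv.subgroupCongr hrange.symm).trans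
      ((QuotientGroup.quotientKerEquivRange ψq).symm.trans
        (QuotientGroup.quotientMulEquivOfEq hkerψ))⟩
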